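/- Let F be a finite field, m ≥ 3, and let α' : Fˣ →* ℂˣ be a nontrivial group homomorphism. Let G₀ be the subgroup of SL(m, F) consisting of all matrices A with A i 0 = 0 for every i ≠ 0. Then there exist x ∈ SL(m, F) with x ∉ G₀ and ξ ∈ G₀ such that x·ξ·x⁻¹ ∈ G₀ and α'((x·ξ·x⁻¹) 0 0) ≠ α'(ξ 0 0). (Here the (0,0) entries of elements of G₀ are nonzero, hence units of F.) -/
import Mathlib


noncomputable section

/-- The stabilizer in `SL(m, F)` of the line spanned by the first standard basis vector:
matrices whose first column vanishes away from the top entry. -/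
def lineStab (F : Type*) [Field F] (m : ℕ) [NeZero m] :
    Subgroup (Matrix.SpecialLinearGroup (Fin m) F) where
  carrier := {A | ∀ i : Fin m, i ≠ 0 → (A : Matrix (Fin m) (Fin m) F) i 0 = 0}
  one_mem' := by
    intro i hi
    show (1 : Matrix (Fin m) (Fin m) F) i 0 = 0
    exact Matrix.one_apply_ne hi
  mul_mem' := by
    intro A B hA hB i hi
    show ((A * B : Matrix.SpecialLinearGroup (Fin m) F) : Matrix (Fin m) (Fin m) F) i 0 = 0
    rw [Matrix.SpecialLinearGroup.coe_mul, Matrix.mul_apply]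
    apply Finset.sum_eq_zero
    intro k _
    rcases eq_or_ne k 0 with hk | hk
    · subst hk; rw [hA i hi, zero_mul]
    · rw [hB k hk, mul_zero]
  inv_mem' := by
    intro A hA i hi
    have hmul : ((A⁻¹ : Matrix.SpecialLinearGroup (Fin m) F) : Matrix (Fin m) (Fin m) F)
        * (A : Matrix (Fin m) (Fin m) F) = 1 := by
      rw [← Matrix.SpecialLinearGroup.coe_mul, inv_mul_cancel]
      rfl
    have key : ∀ j : Fin m,
        ((A⁻¹ : Matrix.SpecialLinearGroup (Fin m) F) : Matrix (Fin m) (Fin m) F) j 0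
          * (A : Matrix (Fin m) (Fin m) F) 0 0 = (1 : Matrix (Fin m) (Fin m) F) j 0 := by
      intro j
      rw [← hmul, Matrix.mul_apply]
      rw [Finset.sum_eq_single 0]
      · intro k _ hk; rw [hA k hk, mul_zero]
      · intro h; exact absurd (Finset.mem_univ 0) h
    have h00 : (A : Matrix (Fin m) (Fin m) F) 0 0 ≠ 0 := by
      have := key 0
      rw [Matrix.one_apply_eq] at this
      exact right_ne_zero_of_mul_eq_one this
    have := key i
    rw [Matrix.one_apply_ne hi] at this
    exact (mul_eq_zero.mp this).resolve_right h00


/-- For `m ≥ 3` and a nontrivial character `α'` of `Fˣ`, there is a conjugation witness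
showing (via the Higman pair detector) that the character `A ↦ α'(A 0 0)` of the point
stabilizer yields no Higman pair by radicalization. -/
theorem stmt12 {F : Type*} [Field F] [Fintype F] {m : ℕ} [NeZero m] (hm : 3 ≤ m)
    (α' : Fˣ →* ℂˣ) (hα' : α' ≠ 1) :
    ∃ x : Matrix.SpecialLinearGroup (Fin m) F, x ∉ lineStab F m ∧
      ∃ ξ ∈ lineStab F m, x * ξ * x⁻¹ ∈ lineStab F m ∧
        ∃ (h1 : ((x * ξ * x⁻¹ : Matrix.SpecialLinearGroup (Fin m) F) :
              Matrix (Fin m) (Fin m) F) 0 0 ≠ 0)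
          (h2 : ((ξ : Matrix.SpecialLinearGroup (Fin m) F) :
              Matrix (Fin m) (Fin m) F) 0 0 ≠ 0),
          α' (Units.mk0 _ h1) ≠ α' (Units.mk0 _ h2) := by
  classical
  obtain ⟨a, ha⟩ : ∃ a : Fˣ, α' a ≠ 1 := by
    by_contra h
    push_neg at h
    exact hα' (MonoidHom.ext fun u => by simpa using h u)
  have hm1 : 1 < m := by omega
  have hm2 : 2 < m := by omega
  set i1 : Fin m := ⟨1, hm1⟩ with hi1
  set i2 : Fin m := ⟨2, hm2⟩ with hi2
  have h10 : i1 ≠ 0 := by simp [i1, Fin.ext_iff]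
  have h20 : i2 ≠ 0 := by simp [i2, Fin.ext_iff]
  have h12 : i1 ≠ i2 := by simp [i1, i2, Fin.ext_iff]
  set σ : Equiv.Perm (Fin m) := Equiv.swap 0 i1 with hσ
  set d : Fin m → F := fun i => if i = 0 then (a : F) else if i = i2 then ((a⁻¹ : Fˣ) : F) else 1 with hd
  set d' : Fin m → F := fun i => d (σ i) with hd'
  have hprod : (∏ i, d i) = 1 := by
    rw [← Finset.prod_subset (Finset.subset_univ ({0, i2} : Finset (Fin m)))
      (fun x _ hx => by
        simp only [Finset.mem_insert, Finset.mem_singleton, not_or] at hx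
        simp [d, hx.1, hx.2])]
    rw [Finset.prod_pair (Ne.symm h20)]
    simp [d, h20, Units.mul_inv]
  have hprod' : (∏ i, d' i) = 1 := by
    rw [hd']
    rw [Equiv.prod_comp σ d]
    exact hprod
  set s : Fin m → F := fun i => if i = i1 then -1 else 1 with hs
  set X : Matrix (Fin m) (Fin m) F := fun i j => if σ i = j then s i else 0 with hX
  have hXeq : X = Matrix.diagonal s * σ.permMatrix F := by
    ext i j
    rw [Matrix.diagonal_mul]
    simp [X, Equiv.Perm.permMatrix, PEquiv.toMatrix, Equiv.toPEquiv, mul_ite]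
  have hdetX : X.det = 1 := by
    rw [hXeq, Matrix.det_mul, Matrix.det_diagonal, Matrix.det_permutation,
      Equiv.Perm.sign_swap (Ne.symm h10)]
    have : (∏ i, s i) = -1 := by
      rw [Finset.prod_eq_single i1 (fun b _ hb => by simp [s, hb]) (by simp)]
      simp [s]
    rw [this]
    simp
  set ξ : Matrix.SpecialLinearGroup (Fin m) F :=
    ⟨Matrix.diagonal d, by rw [Matrix.det_diagonal]; exact hprod⟩ with hξdef
  set ξ' : Matrix.SpecialLinearGroup (Fin m) F :=
    ⟨Matrix.diagonal d', by rw [Matrix.det_diagonal]; exact hprod'⟩ with hξ'def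
  set x : Matrix.SpecialLinearGroup (Fin m) F := ⟨X, hdetX⟩ with hxdef
  have hcomm : X * Matrix.diagonal d = Matrix.diagonal d' * X := by
    ext i j
    rw [Matrix.mul_diagonal, Matrix.diagonal_mul]
    by_cases h : σ i = j
    · simp only [X, if_pos h, hd']
      rw [h, mul_comm]
    · simp [X, if_neg h]
  have hconj : x * ξ * x⁻¹ = ξ' := by
    have h1 : x * ξ = ξ' * x := Subtype.ext (by
      simp only [Matrix.SpecialLinearGroup.coe_mul, hxdef, hξdef, hξ'def]
      exact hcomm)
    rw [h1, mul_inv_cancel_right]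
  have hentry1 : ((x * ξ * x⁻¹ : Matrix.SpecialLinearGroup (Fin m) F) :
      Matrix (Fin m) (Fin m) F) 0 0 = 1 := by
    rw [hconj]
    show Matrix.diagonal d' 0 0 = 1
    rw [Matrix.diagonal_apply_eq]
    simp [d', d, σ, Equiv.swap_apply_left, h10, h12]
  have hentry2 : ((ξ : Matrix.SpecialLinearGroup (Fin m) F) :
      Matrix (Fin m) (Fin m) F) 0 0 = (a : F) := by
    show Matrix.diagonal d 0 0 = (a : F)
    rw [Matrix.diagonal_apply_eq]
    simp [d]
  refine ⟨x, ?_, ξ, ?_, ?_, ?_⟩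
  · intro hx
    have := hx i1 h10
    simp only [hxdef] at this
    simp [X, σ, Equiv.swap_apply_right, s] at this
  · intro i hi
    exact Matrix.diagonal_apply_ne d hi
  · rw [hconj]
    intro i hi
    exact Matrix.diagonal_apply_ne d' hi
  · have h1 : ((x * ξ * x⁻¹ : Matrix.SpecialLinearGroup (Fin m) F) :
        Matrix (Fin m) (Fin m) F) 0 0 ≠ 0 := by rw [hentry1]; exact one_ne_zero
    have h2 : ((ξ : Matrix.SpecialLinearGroup (Fin m) F) :
        Matrix (Fin m) (Fin m) F) 0 0 ≠ 0 := by rw [hentry2]; exact a.ne_zero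
    refine ⟨h1, h2, ?_⟩
    rw [show Units.mk0 _ h1 = (1 : Fˣ) from Units.ext hentry1,
      show Units.mk0 _ h2 = a from Units.ext hentry2, map_one]
    exact Ne.symm ha
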